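/- arXiv:math/9802046 — 3 statements merged into one kernel-verified Lean document; each statement's English description precedes it below -/
import Mathlib

section
/- For every positive integer n and every positive integer b, φ(n^b) ≤ φ(n) + δ(b)·log₂(n), where the inequality is between real numbers and log₂ is the real base-2 logarithm. -/
/-- Number of digits of `n` in base `B`. -/
def dig (B n : ℕ) : ℕ := (Nat.digits B n).length

/-- Number of digits needed to write the prime power factorisation of `n` in base `B`. -/
def phi (B n : ℕ) : ℕ :=
  ∑ p ∈ n.factorization.support,
    (dig B p + if n.factorization p = 1 then 0 else dig B (n.factorization p))

/-- `h B n = δ(n) - φ(n)` as an integer. -/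
def hEcon (B n : ℕ) : ℤ := (dig B n : ℤ) - (phi B n : ℤ)

lemma dig_mul_le (B : ℕ) (hB : 2 ≤ B) (x y : ℕ) : dig B (x * y) ≤ dig B x + dig B y := by
  have hB1 : 1 < B := hB
  rcases Nat.eq_zero_or_pos x with rfl | hx
  · simp [dig]
  rcases Nat.eq_zero_or_pos y with rfl | hy
  · simp [dig]
  have hx' : x < B ^ dig B x := Nat.lt_base_pow_length_digits hB1
  have hy' : y < B ^ dig B y := Nat.lt_base_pow_length_digits hB1
  have hxy : x * y < B ^ (dig B x + dig B y) := by
    rw [pow_add]; exact Nat.mul_lt_mul'' hx' hy'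
  have hne : x * y ≠ 0 := by positivity
  rw [dig, Nat.digits_len B _ hB1 hne]
  have := (Nat.log_lt_iff_lt_pow hB1 hne).2 hxy
  omega

theorem statement_6 (B : ℕ) (hB : 2 ≤ B) (n b : ℕ) (hn : 0 < n) (hb : 0 < b) :
    (phi B (n ^ b) : ℝ) ≤ (phi B n : ℝ) + (dig B b : ℝ) * Real.logb 2 n := by
  have hB1 : 1 < B := hB
  have hsupp : (n ^ b).factorization.support = n.factorization.support := by
    rw [Nat.factorization_pow]
    exact Finsupp.support_smul_eq hb.ne'
  have key : phi B (n ^ b) ≤ phi B n + n.factorization.support.card * dig B b := by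
    unfold phi
    rw [hsupp]
    have hc : n.factorization.support.card * dig B b
        = ∑ _p ∈ n.factorization.support, dig B b := by
      rw [Finset.sum_const, smul_eq_mul]
    rw [hc, ← Finset.sum_add_distrib]
    apply Finset.sum_le_sum
    intro p hp
    have hfp : (n ^ b).factorization p = b * n.factorization p := by
      simp [Nat.factorization_pow]
    rw [hfp]
    set a := n.factorization p with ha
    rcases eq_or_ne a 1 with h1 | h1
    · rw [h1, mul_one]
      have : (if b = 1 then 0 else dig B b) ≤ dig B b := by
        split_ifs <;> simp
      simp only [add_zero]
      exact Nat.add_le_add_left this (dig B p)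
    · have hane : a ≠ 0 := Finsupp.mem_support_iff.1 hp
      have hba : b * a ≠ 1 := fun h => h1 (Nat.eq_one_of_mul_eq_one_left h)
      rw [if_neg hba, if_neg h1]
      have := dig_mul_le B hB b a
      omega
  have hcardnat : 2 ^ n.primeFactors.card ≤ n := by
    calc 2 ^ n.primeFactors.card ≤ ∏ p ∈ n.primeFactors, p :=
          Finset.pow_card_le_prod _ _ _ fun p hp => (Nat.prime_of_mem_primeFactors hp).two_le
      _ ≤ n := Nat.le_of_dvd hn (Nat.prod_primeFactors_dvd n)
  have hcard : (n.primeFactors.card : ℝ) ≤ Real.logb 2 n := by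
    have h2 : ((2 : ℝ)) ^ n.primeFactors.card ≤ (n : ℝ) := by exact_mod_cast hcardnat
    have := Real.logb_le_logb_of_le (by norm_num : (1:ℝ) < 2)
      (by positivity : (0:ℝ) < (2:ℝ) ^ n.primeFactors.card) h2
    rwa [Real.logb_pow, Real.logb_self_eq_one (by norm_num), mul_one] at this
  have hsupp' : n.factorization.support = n.primeFactors := Nat.support_factorization n
  calc (phi B (n ^ b) : ℝ) ≤ (phi B n : ℝ) + (dig B b : ℝ) * (n.primeFactors.card : ℝ) := by
        rw [← hsupp']
        have : (phi B (n ^ b) : ℝ) ≤ ((phi B n + n.factorization.support.card * dig B b : ℕ) : ℝ) := by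
          exact_mod_cast key
        push_cast at this
        linarith
    _ ≤ (phi B n : ℝ) + (dig B b : ℝ) * Real.logb 2 n := by
        have hd : (0:ℝ) ≤ (dig B b : ℝ) := Nat.cast_nonneg _
        nlinarith [hcard, hd]
end

section
/- If m is a frugal positive integer and n is an economical positive integer, then m·n is economical; that is, if h(m) > 0 and h(n) ≥ 0, then h(m·n) ≥ 0. -/
lemma dig_eq_log {B : ℕ} (hB : 2 ≤ B) {n : ℕ} (hn : n ≠ 0) :
    dig B n = Nat.log B n + 1 := Nat.digits_len B n hB hn

lemma dig_mono {B : ℕ} {a b : ℕ} (h : a ≤ b) : dig B a ≤ dig B b :=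
  Nat.le_digits_len_le B a b h

lemma dig_pos {B : ℕ} (hB : 2 ≤ B) {n : ℕ} (hn : n ≠ 0) : 1 ≤ dig B n := by
  rw [dig_eq_log hB hn]; omega

/-- `dig m + dig n ≤ dig (m*n) + 1` -/
lemma dig_mul {B : ℕ} (hB : 2 ≤ B) {m n : ℕ} (hm : m ≠ 0) (hn : n ≠ 0) :
    dig B m + dig B n ≤ dig B (m * n) + 1 := by
  rw [dig_eq_log hB hm, dig_eq_log hB hn, dig_eq_log hB (Nat.mul_ne_zero hm hn)]
  have : B ^ (Nat.log B m + Nat.log B n) ≤ m * n := by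
    rw [pow_add]
    exact Nat.mul_le_mul (Nat.pow_log_le_self B hm) (Nat.pow_log_le_self B hn)
  have := (Nat.le_log_iff_pow_le hB (Nat.mul_ne_zero hm hn)).mpr this
  omega

lemma dig_add {B : ℕ} (hB : 2 ≤ B) {a b : ℕ} (ha : a ≠ 0) (hb : b ≠ 0) :
    dig B (a + b) ≤ max (dig B a) (dig B b) + 1 := by
  rw [dig_eq_log hB ha, dig_eq_log hB hb, dig_eq_log hB (by omega)]
  set M := max (Nat.log B a) (Nat.log B b) with hM
  have ha' : a < B ^ (M + 1) := lt_of_lt_of_le (Nat.lt_pow_succ_log_self hB a)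
    (Nat.pow_le_pow_right (by omega) (by omega))
  have hb' : b < B ^ (M + 1) := lt_of_lt_of_le (Nat.lt_pow_succ_log_self hB b)
    (Nat.pow_le_pow_right (by omega) (by omega))
  have : a + b < B ^ (M + 2) := by
    have : B ^ (M + 2) = B * B ^ (M + 1) := by ring
    have h2 : 2 * B ^ (M + 1) ≤ B * B ^ (M + 1) :=
      Nat.mul_le_mul_right _ hB
    omega
  have := (Nat.log_lt_iff_lt_pow hB (by omega : a + b ≠ 0)).mpr this
  omega

/-- per-prime key inequality -/
lemma key {B : ℕ} (hB : 2 ≤ B) {p a b : ℕ} (hp : 2 ≤ p) (ha : a ≠ 0) (hb : b ≠ 0) :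
    (dig B p + if a + b = 1 then 0 else dig B (a + b)) ≤
      (dig B p + if a = 1 then 0 else dig B a) +
      (dig B p + if b = 1 then 0 else dig B b) := by
  have hab : a + b ≠ 1 := by omega
  rw [if_neg hab]
  have hdp : 1 ≤ dig B p := dig_pos hB (by omega)
  rcases eq_or_ne a 1 with rfl | ha1
  · rcases eq_or_ne b 1 with rfl | hb1
    · simp only [if_pos rfl]
      have : dig B (1 + 1) ≤ dig B p := dig_mono hp
      omega
    · rw [if_pos rfl, if_neg hb1]
      have h1 : dig B (1 + b) ≤ max (dig B 1) (dig B b) + 1 := dig_add hB one_ne_zero hb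
      have h2 : dig B 1 ≤ dig B b := dig_mono (by omega)
      omega
  · rcases eq_or_ne b 1 with rfl | hb1
    · rw [if_neg ha1, if_pos rfl]
      have h1 : dig B (a + 1) ≤ max (dig B a) (dig B 1) + 1 := dig_add hB ha one_ne_zero
      have h2 : dig B 1 ≤ dig B a := dig_mono (by omega)
      omega
    · rw [if_neg ha1, if_neg hb1]
      have h1 : dig B (a + b) ≤ max (dig B a) (dig B b) + 1 := dig_add hB ha hb
      have h2 : 1 ≤ dig B a := dig_pos hB ha
      have h3 : 1 ≤ dig B b := dig_pos hB hb
      omega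

lemma phi_mul {B : ℕ} (hB : 2 ≤ B) {m n : ℕ} (hm : m ≠ 0) (hn : n ≠ 0) :
    phi B (m * n) ≤ phi B m + phi B n := by
  classical
  unfold phi
  have hsupp : (m * n).factorization.support =
      m.factorization.support ∪ n.factorization.support := by
    simp [Nat.primeFactors_mul hm hn]
  have hfac : ∀ p, (m * n).factorization p = m.factorization p + n.factorization p := by
    intro p; rw [Nat.factorization_mul hm hn]; rfl
  set S := m.factorization.support ∪ n.factorization.support with hS
  set gm : ℕ → ℕ := fun p =>
    if p ∈ m.factorization.support then
      dig B p + if m.factorization p = 1 then 0 else dig B (m.factorization p) else 0 with hgm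
  set gn : ℕ → ℕ := fun p =>
    if p ∈ n.factorization.support then
      dig B p + if n.factorization p = 1 then 0 else dig B (n.factorization p) else 0 with hgn
  have hm' : (∑ p ∈ m.factorization.support,
      (dig B p + if m.factorization p = 1 then 0 else dig B (m.factorization p)))
      = ∑ p ∈ S, gm p := by
    rw [Finset.sum_ite_mem, Finset.union_inter_cancel_left]
  have hn' : (∑ p ∈ n.factorization.support,
      (dig B p + if n.factorization p = 1 then 0 else dig B (n.factorization p)))
      = ∑ p ∈ S, gn p := by
    rw [Finset.sum_ite_mem, Finset.union_inter_cancel_right]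
  rw [hsupp, hm', hn', ← Finset.sum_add_distrib]
  apply Finset.sum_le_sum
  intro p hpS
  have hpp : p.Prime := by
    rw [hS, Finset.mem_union] at hpS
    rcases hpS with h | h
    · exact Nat.prime_of_mem_primeFactors h
    · exact Nat.prime_of_mem_primeFactors h
  have hp2 : 2 ≤ p := hpp.two_le
  rw [hfac p]
  by_cases hma : m.factorization p = 0
  · by_cases hna : n.factorization p = 0
    · exfalso
      rw [hS, Finset.mem_union, Finsupp.mem_support_iff, Finsupp.mem_support_iff] at hpS
      tauto
    · simp only [hgm, hgn, hma, if_neg (Finsupp.mem_support_iff.not.mpr (by simpa using hma)),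
        if_pos (Finsupp.mem_support_iff.mpr hna), zero_add]
      exact le_rfl
  · by_cases hna : n.factorization p = 0
    · simp only [hgm, hgn, hna, if_neg (Finsupp.mem_support_iff.not.mpr (by simpa using hna)),
        if_pos (Finsupp.mem_support_iff.mpr hma), add_zero]
      exact le_rfl
    · simp only [hgm, hgn, if_pos (Finsupp.mem_support_iff.mpr hma),
        if_pos (Finsupp.mem_support_iff.mpr hna)]
      exact key hB hp2 hma hna

theorem statement_8 (B : ℕ) (hB : 2 ≤ B) (m n : ℕ) (hm : 0 < m) (hn : 0 < n)
    (hfrugal : 0 < hEcon B m) (hecon : 0 ≤ hEcon B n) :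
    0 ≤ hEcon B (m * n) := by
  unfold hEcon at *
  have h1 : dig B m + dig B n ≤ dig B (m * n) + 1 := dig_mul hB hm.ne' hn.ne'
  have h2 : phi B (m * n) ≤ phi B m + phi B n := phi_mul hB hm.ne' hn.ne'
  omega
end

section
/- For every integer k > 0, there are infinitely many positive integers n with h(n) ≤ −k. -/
lemma lt_pow_dig {B : ℕ} (hB : 2 ≤ B) (n : ℕ) : n < B ^ dig B n :=
  Nat.lt_base_pow_length_digits hB

lemma dig_le {B n t : ℕ} (hB : 2 ≤ B) (h : n < B ^ t) : dig B n ≤ t := by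
  rcases Nat.eq_zero_or_pos n with rfl | hn
  · simp [dig]
  · rw [dig, Nat.digits_len B n hB hn.ne']
    exact (Nat.log_lt_iff_lt_pow hB hn.ne').mpr h

lemma factorization_prod_primes {S : Finset ℕ} (hS : ∀ p ∈ S, p.Prime) :
    (∏ p ∈ S, p).factorization = ∑ p ∈ S, Finsupp.single p 1 := by
  rw [Nat.factorization_prod (fun p hp => (hS p hp).pos.ne')]
  exact Finset.sum_congr rfl fun p hp => (hS p hp).factorization

lemma phi_prod_primes {B : ℕ} {S : Finset ℕ} (hS : ∀ p ∈ S, p.Prime) :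
    phi B (∏ p ∈ S, p) = ∑ p ∈ S, dig B p := by
  have hfac := factorization_prod_primes hS
  have hval : ∀ q ∈ S, (∏ p ∈ S, p).factorization q = 1 := by
    intro q hq
    rw [hfac, Finsupp.finset_sum_apply]
    rw [Finset.sum_eq_single q (fun b _ hb => Finsupp.single_eq_of_ne hb.symm) (fun h => absurd hq h)]
    simp
  have hsupp : (∏ p ∈ S, p).factorization.support = S := by
    rw [hfac, Finsupp.support_sum_eq_biUnion]
    · ext q
      simp [Finsupp.support_single_ne_zero _ (one_ne_zero)]
    · intro i j hij
      simp only [Finsupp.support_single_ne_zero _ (one_ne_zero : (1:ℕ) ≠ 0),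
        Finset.disjoint_singleton_left, Finset.mem_singleton]
      omega
  rw [phi, hsupp]
  refine Finset.sum_congr rfl fun p hp => ?_
  rw [hval p hp]
  simp

lemma one_add_sum_le_prod {S : Finset ℕ} (f : ℕ → ℝ) (hf : ∀ i ∈ S, 0 ≤ f i) :
    1 + ∑ i ∈ S, f i ≤ ∏ i ∈ S, (1 + f i) := by
  induction S using Finset.cons_induction with
  | empty => simp
  | cons a s ha ih =>
    rw [Finset.sum_cons, Finset.prod_cons]
    have hfa := hf a (Finset.mem_cons_self a s)
    have hs : ∀ i ∈ s, 0 ≤ f i := fun i hi => hf i (Finset.mem_cons_of_mem hi)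
    have ihs := ih hs
    have hsum : 0 ≤ ∑ i ∈ s, f i := Finset.sum_nonneg hs
    nlinarith [Finset.sum_nonneg hs]

/-- Key lemma: if the product of (1+1/p) over a prime finset exceeds B^K, then
the product of the primes has `hEcon ≤ -K`. -/
lemma key_s13 {B K : ℕ} (hB : 2 ≤ B) {S : Finset ℕ} (hS : ∀ p ∈ S, p.Prime)
    (hprod : (B : ℝ) ^ K < ∏ p ∈ S, (1 + 1 / (p : ℝ))) :
    hEcon B (∏ p ∈ S, p) ≤ -(K : ℤ) := by
  set n := ∏ p ∈ S, p with hn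
  have hppos : ∀ p ∈ S, (0:ℝ) < (p:ℝ) := fun p hp => by
    exact_mod_cast (hS p hp).pos
  -- n * B^K < ∏ (p+1) in ℝ
  have h1 : (n : ℝ) * (B : ℝ) ^ K < ∏ p ∈ S, ((p : ℝ) + 1) := by
    have : ∏ p ∈ S, ((p : ℝ) + 1) = (n : ℝ) * ∏ p ∈ S, (1 + 1 / (p : ℝ)) := by
      rw [hn, Nat.cast_prod, ← Finset.prod_mul_distrib]
      refine Finset.prod_congr rfl fun p hp => ?_
      have hp0 : (p:ℝ) ≠ 0 := (hppos p hp).ne'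
      rw [mul_add, mul_one, mul_one_div, div_self hp0]
    rw [this]
    have hnpos : (0:ℝ) < (n:ℝ) := by
      rw [hn]; push_cast
      exact Finset.prod_pos hppos
    exact (mul_lt_mul_iff_right₀ hnpos).mpr hprod
  -- cast to ℕ
  have h2 : n * B ^ K < ∏ p ∈ S, (p + 1) := by
    have := h1
    push_cast at this
    exact_mod_cast this
  -- ∏ (p+1) ≤ B ^ (∑ dig)
  have h3 : ∏ p ∈ S, (p + 1) ≤ B ^ (∑ p ∈ S, dig B p) := by
    rw [← Finset.prod_pow_eq_pow_sum]
    exact Finset.prod_le_prod' fun p _ => lt_pow_dig hB p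
  have h4 : n * B ^ K < B ^ (∑ p ∈ S, dig B p) := lt_of_lt_of_le h2 h3
  have hKle : K ≤ ∑ p ∈ S, dig B p := by
    by_contra hcon
    push_neg at hcon
    have hle : B ^ (∑ p ∈ S, dig B p) ≤ B ^ K := Nat.pow_le_pow_right (by omega) hcon.le
    have hn1 : 1 ≤ n := Nat.one_le_iff_ne_zero.mpr (by
      rw [hn]
      exact (Finset.prod_pos (fun p hp => (hS p hp).pos)).ne')
    have h7 : B ^ K ≤ n * B ^ K := Nat.le_mul_of_pos_left _ hn1
    omega
  have h5 : n < B ^ (∑ p ∈ S, dig B p - K) := by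
    have hsplit : B ^ (∑ p ∈ S, dig B p) = B ^ (∑ p ∈ S, dig B p - K) * B ^ K := by
      rw [← pow_add]
      congr 1
      omega
    rw [hsplit] at h4
    have hBK : 0 < B ^ K := Nat.pow_pos (by omega)
    exact lt_of_mul_lt_mul_right h4 (Nat.zero_le _)
  have h6 : dig B n ≤ ∑ p ∈ S, dig B p - K := dig_le hB h5
  rw [hEcon, phi_prod_primes hS]
  omega

lemma exists_prime_finset (B K : ℕ) (hB : 2 ≤ B) :
    ∃ S : Finset ℕ, (∀ p ∈ S, p.Prime) ∧ (B : ℝ) ^ K < ∏ p ∈ S, (1 + 1 / (p : ℝ)) := by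
  set f : ℕ → ℝ := Set.indicator {p | p.Prime} (fun n : ℕ ↦ (1 : ℝ) / n) with hf
  have hf0 : ∀ n, 0 ≤ f n := by
    intro n
    exact Set.indicator_nonneg (fun p _ => by positivity) n
  have hdiv : Filter.Tendsto (fun m => ∑ i ∈ Finset.range m, f i) Filter.atTop Filter.atTop :=
    (not_summable_iff_tendsto_nat_atTop_of_nonneg hf0).mp not_summable_one_div_on_primes
  obtain ⟨m, hm⟩ := (hdiv.eventually (Filter.eventually_gt_atTop ((B:ℝ)^K))).exists
  refine ⟨(Finset.range m).filter Nat.Prime, fun p hp => (Finset.mem_filter.mp hp).2, ?_⟩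
  have hsum : ∑ p ∈ (Finset.range m).filter Nat.Prime, (1 / (p:ℝ)) = ∑ i ∈ Finset.range m, f i := by
    rw [hf, Finset.sum_indicator_eq_sum_filter]
    congr 1
  calc (B : ℝ) ^ K < ∑ i ∈ Finset.range m, f i := hm
    _ = ∑ p ∈ (Finset.range m).filter Nat.Prime, (1 / (p:ℝ)) := hsum.symm
    _ ≤ 1 + ∑ p ∈ (Finset.range m).filter Nat.Prime, (1 / (p:ℝ)) := by linarith
    _ ≤ ∏ p ∈ (Finset.range m).filter Nat.Prime, (1 + 1/(p:ℝ)) :=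
        one_add_sum_le_prod _ (fun i hi => by positivity)

theorem statement_13 (B : ℕ) (hB : 2 ≤ B) (k : ℤ) (hk : 0 < k) :
    {n : ℕ | 0 < n ∧ hEcon B n ≤ -k}.Infinite := by
  set K := k.toNat with hK
  have hKk : (K : ℤ) = k := Int.toNat_of_nonneg hk.le
  obtain ⟨S, hSprime, hSprod⟩ := exists_prime_finset B K hB
  apply Set.infinite_of_forall_exists_gt
  intro N
  -- choose a prime q bigger than N and all elements of S
  obtain ⟨q, hqle, hqprime⟩ := Nat.exists_infinite_primes (max (N + 1) ((S.sup id) + 1))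
  have hqN : N < q :=
    lt_of_lt_of_le (lt_of_lt_of_le (Nat.lt_succ_self N) (le_max_left _ _)) hqle
  have hqS : q ∉ S := by
    intro hq
    have : q ≤ S.sup id := Finset.le_sup (f := id) hq
    omega
  set T := insert q S with hT
  have hTprime : ∀ p ∈ T, p.Prime := by
    intro p hp
    rcases Finset.mem_insert.mp hp with rfl | hp
    · exact hqprime
    · exact hSprime p hp
  have hTprod : (B : ℝ) ^ K < ∏ p ∈ T, (1 + 1 / (p : ℝ)) := by
    rw [hT, Finset.prod_insert hqS]
    have hq0 : (0:ℝ) < (q:ℝ) := by exact_mod_cast hqprime.pos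
    have h1 : (1:ℝ) ≤ 1 + 1/(q:ℝ) := by
      have := one_div_pos.mpr hq0
      linarith
    have hpos : (0:ℝ) < ∏ p ∈ S, (1 + 1 / (p : ℝ)) := by
      apply Finset.prod_pos
      intro p hp
      have : (0:ℝ) < (p:ℝ) := by exact_mod_cast (hSprime p hp).pos
      positivity
    nlinarith
  refine ⟨∏ p ∈ T, p, ⟨Finset.prod_pos (fun p hp => (hTprime p hp).pos), ?_⟩, ?_⟩
  · have := key_s13 hB hTprime hTprod
    omega
  · calc N < q := hqN
      _ ≤ ∏ p ∈ T, p := by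
        rw [hT, Finset.prod_insert hqS]
        have : 1 ≤ ∏ p ∈ S, p := Nat.one_le_iff_ne_zero.mpr
          (Finset.prod_pos (fun p hp => (hSprime p hp).pos)).ne'
        calc q = q * 1 := (mul_one q).symm
          _ ≤ q * ∏ p ∈ S, p := Nat.mul_le_mul_left q this
end
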